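/- Let (x, y) be a bivariate centered Gaussian random vector. Then E[x·y] = E[x·exp(y − E[y²]/2)]. -/

import Mathlib

open MeasureTheory ProbabilityTheory Real
open scoped NNReal

namespace BGaux

open Set
open scoped ENNReal


lemma integral_gaussian_eq (m : ℝ) {v : ℝ≥0} (hv : v ≠ 0) (f : ℝ → ℝ) :
    ∫ u, f u ∂(gaussianReal m v) = ∫ u, gaussianPDFReal m v u * f u := by
  rw [gaussianReal_of_var_ne_zero m hv]
  have h : (gaussianPDF m v) = fun u => ((Real.toNNReal (gaussianPDFReal m v u) : ℝ≥0) : ℝ≥0∞) :=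
    rfl
  rw [h, integral_withDensity_eq_integral_smul
    (by exact (measurable_gaussianPDFReal m v).real_toNNReal) f]
  congr 1
  ext u
  simp [NNReal.smul_def, Real.coe_toNNReal _ (gaussianPDFReal_nonneg m v u)]

lemma integrable_gaussian_iff (m : ℝ) {v : ℝ≥0} (hv : v ≠ 0) (f : ℝ → ℝ) :
    Integrable f (gaussianReal m v) ↔
      Integrable (fun u => gaussianPDFReal m v u * f u) volume := by
  rw [gaussianReal_of_var_ne_zero m hv]
  have h : (gaussianPDF m v) = fun u => ((Real.toNNReal (gaussianPDFReal m v u) : ℝ≥0) : ℝ≥0∞) :=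
    rfl
  rw [h, integrable_withDensity_iff_integrable_smul
    (by exact (measurable_gaussianPDFReal m v).real_toNNReal)]
  constructor <;> intro h' <;> refine h'.congr (Filter.Eventually.of_forall fun u => ?_) <;>
    simp [NNReal.smul_def, Real.coe_toNNReal _ (gaussianPDFReal_nonneg m v u)]



lemma rpow_two' (u : ℝ) : u ^ (2:ℝ) = u ^ (2:ℕ) := by
  rw [← Real.rpow_natCast u 2]; norm_num

-- key exp-tilting identity
lemma pdf_tilt {v : ℝ≥0} (hv : v ≠ 0) (t u : ℝ) :
    gaussianPDFReal 0 v u * rexp (t * u)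
      = rexp (t ^ 2 * v / 2) * gaussianPDFReal (t * v) v u := by
  have hv' : (0:ℝ) < v := by positivity
  simp only [gaussianPDFReal]
  have h : -(u - 0) ^ 2 / (2 * (v:ℝ)) + t * u
      = t ^ 2 * v / 2 + -(u - t * v) ^ 2 / (2 * v) := by
    field_simp
    ring
  rw [mul_assoc, ← Real.exp_add, h, Real.exp_add]
  ring

lemma pdf_shift (m : ℝ) (v : ℝ≥0) (u : ℝ) :
    gaussianPDFReal m v (u + m) = gaussianPDFReal 0 v u := by
  simp [gaussianPDFReal]

lemma pdf_even (v : ℝ≥0) (u : ℝ) :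
    gaussianPDFReal 0 v (-u) = gaussianPDFReal 0 v u := by
  simp [gaussianPDFReal]

-- integrability of u ↦ pdf * u
lemma integrable_pdf_mul_id (m : ℝ) {v : ℝ≥0} (hv : v ≠ 0) :
    Integrable (fun u => gaussianPDFReal m v u * u) volume := by
  have hv' : (0:ℝ) < v := by positivity
  have hb : (0:ℝ) < (2 * (v:ℝ))⁻¹ := by positivity
  have h1 : Integrable (fun u : ℝ => u * rexp (-(2 * (v:ℝ))⁻¹ * u ^ 2)) volume :=
    integrable_mul_exp_neg_mul_sq hb
  have h2 : Integrable (fun u : ℝ => rexp (-(2 * (v:ℝ))⁻¹ * u ^ 2)) volume :=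
    integrable_exp_neg_mul_sq hb
  have h3 : Integrable (fun u : ℝ =>
      (√(2 * π * v))⁻¹ * (u * rexp (-(2 * (v:ℝ))⁻¹ * u ^ 2)
        + m * rexp (-(2 * (v:ℝ))⁻¹ * u ^ 2))) volume :=
    ((h1.add (h2.const_mul m)).const_mul _)
  have h4 := h3.comp_sub_right m
  refine h4.congr (Filter.Eventually.of_forall fun u => ?_)
  have hAB : -(2 * (v:ℝ))⁻¹ * (u - m) ^ 2 = -((u - m) ^ 2 / (2 * (v:ℝ))) := by
    rw [div_eq_mul_inv]; ring
  simp only [gaussianPDFReal, hAB]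
  ring_nf

lemma integrable_pdf_mul_sq {v : ℝ≥0} (hv : v ≠ 0) :
    Integrable (fun u => gaussianPDFReal 0 v u * u ^ 2) volume := by
  have hv' : (0:ℝ) < v := by positivity
  have hb : (0:ℝ) < (2 * (v:ℝ))⁻¹ := by positivity
  have h1 : Integrable (fun u : ℝ => u ^ (2:ℝ) * rexp (-(2 * (v:ℝ))⁻¹ * u ^ 2)) volume :=
    integrable_rpow_mul_exp_neg_mul_sq hb (by norm_num)
  have h1' : Integrable (fun u : ℝ => u ^ 2 * rexp (-(2 * (v:ℝ))⁻¹ * u ^ 2)) volume := by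
    refine h1.congr (Filter.Eventually.of_forall fun u => ?_)
    simp only [rpow_two']
  refine (h1'.const_mul ((√(2 * π * v))⁻¹)).congr (Filter.Eventually.of_forall fun u => ?_)
  have hAB : -(2 * (v:ℝ))⁻¹ * u ^ 2 = -((u - 0) ^ 2 / (2 * (v:ℝ))) := by
    rw [div_eq_mul_inv]; ring
  simp only [gaussianPDFReal, hAB]
  ring_nf



lemma rpow_two'' (u : ℝ) : u ^ (2:ℝ) = u ^ (2:ℕ) := by
  rw [← Real.rpow_natCast u 2]; norm_num


-- mean: ∫ pdf0 * u = 0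
lemma integral_pdf_mul_id_zero {v : ℝ≥0} :
    ∫ u, gaussianPDFReal 0 v u * u = 0 := by
  have h := integral_neg_eq_self (fun u : ℝ => gaussianPDFReal 0 v u * u) volume
  have h2 : (∫ u, gaussianPDFReal 0 v (-u) * (-u)) =
      ∫ u, -(gaussianPDFReal 0 v u * u) := by
    congr 1; ext u; rw [show gaussianPDFReal 0 v (-u) = gaussianPDFReal 0 v u by
      simp [gaussianPDFReal]]; ring
  rw [h2, integral_neg] at h
  linarith

lemma integral_pdf_mul_id (m : ℝ) {v : ℝ≥0} (hv : v ≠ 0) :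
    ∫ u, gaussianPDFReal m v u * u = m := by
  have hshift := integral_add_right_eq_self (μ := volume)
    (fun u => gaussianPDFReal m v u * u) m
  rw [← hshift]
  have h1 : (fun u => gaussianPDFReal m v (u + m) * (u + m))
      = fun u => gaussianPDFReal 0 v u * u + m * gaussianPDFReal 0 v u := by
    ext u
    rw [show gaussianPDFReal m v (u + m) = gaussianPDFReal 0 v u by simp [gaussianPDFReal]]
    ring
  rw [h1, integral_add (integrable_pdf_mul_id 0 hv)
    ((integrable_gaussianPDFReal 0 v).const_mul m),
    integral_pdf_mul_id_zero, integral_const_mul, integral_gaussianPDFReal_eq_one 0 hv]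
  ring

-- ∫ x^2 * exp (-b x^2) over ℝ
lemma integral_sq_mul_exp {b : ℝ} (hb : 0 < b) :
    ∫ u : ℝ, u ^ 2 * rexp (-b * u ^ 2) = √π / 2 * b ^ (-(3:ℝ)/2) := by
  have habs : (∫ u : ℝ, u ^ 2 * rexp (-b * u ^ 2))
      = 2 * ∫ u in Ioi (0:ℝ), u ^ 2 * rexp (-b * u ^ 2) := by
    rw [← integral_comp_abs (f := fun u => u ^ 2 * rexp (-b * u ^ 2))]
    congr 1; ext u; rw [sq_abs]
  have key := integral_rpow_mul_exp_neg_mul_rpow (p := 2) (q := 2)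
    (by norm_num) (by norm_num) hb
  have h2 : (∫ u in Ioi (0:ℝ), u ^ 2 * rexp (-b * u ^ 2))
      = ∫ u in Ioi (0:ℝ), u ^ (2:ℝ) * rexp (-b * u ^ (2:ℝ)) := by
    refine setIntegral_congr_fun measurableSet_Ioi (fun u hu => ?_)
    simp only [rpow_two'']
  have hΓ : Real.Gamma ((2+1)/2 : ℝ) = √π / 2 := by
    rw [show ((2+1)/2 : ℝ) = 1/2 + 1 by norm_num, Real.Gamma_add_one (by norm_num),
      Real.Gamma_one_half_eq]
    ring
  rw [habs, h2, key, hΓ]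
  norm_num
  ring

-- second moment
lemma integral_pdf_mul_sq {v : ℝ≥0} (hv : v ≠ 0) :
    ∫ u, gaussianPDFReal 0 v u * u ^ 2 = v := by
  have hv' : (0:ℝ) < v := by positivity
  have hb : (0:ℝ) < (2 * (v:ℝ))⁻¹ := by positivity
  have h1 : (fun u : ℝ => gaussianPDFReal 0 v u * u ^ 2)
      = fun u : ℝ => (√(2 * π * v))⁻¹ * (u ^ 2 * rexp (-(2 * (v:ℝ))⁻¹ * u ^ 2)) := by
    ext u
    have hAB : -(2 * (v:ℝ))⁻¹ * u ^ 2 = -((u - 0) ^ 2 / (2 * (v:ℝ))) := by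
      rw [div_eq_mul_inv]; ring
    simp only [gaussianPDFReal, hAB]
    ring_nf
  rw [h1, integral_const_mul, integral_sq_mul_exp hb]
  have e1 : ((2*(v:ℝ))⁻¹) ^ (-(3:ℝ)/2) = (2*(v:ℝ)) ^ ((3:ℝ)/2) := by
    rw [Real.inv_rpow (by positivity), ← Real.rpow_neg (by positivity)]
    norm_num
  have e2 : (2*(v:ℝ)) ^ ((3:ℝ)/2) = (2*(v:ℝ)) ^ ((1:ℝ)/2) * (2*(v:ℝ)) := by
    rw [show (3:ℝ)/2 = 1/2 + 1 by norm_num, Real.rpow_add (by positivity), Real.rpow_one]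
  have e3 : √(2*π*(v:ℝ)) = π^((1:ℝ)/2) * (2*(v:ℝ))^((1:ℝ)/2) := by
    rw [show (2*π*(v:ℝ)) = π * (2*v) by ring, Real.sqrt_eq_rpow,
      Real.mul_rpow pi_pos.le (by positivity)]
  have e4 : √π = π ^ ((1:ℝ)/2) := Real.sqrt_eq_rpow π
  have hp : (0:ℝ) < π ^ ((1:ℝ)/2) := Real.rpow_pos_of_pos pi_pos _
  have hq : (0:ℝ) < (2*(v:ℝ)) ^ ((1:ℝ)/2) := Real.rpow_pos_of_pos (by positivity) _
  rw [e1, e2, e3, e4]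
  field_simp


lemma integrable_diracR (f : ℝ → ℝ) (a : ℝ) : Integrable f (Measure.dirac a) :=
  (integrable_const (f a)).congr (MeasureTheory.ae_eq_dirac f).symm

-- moments of gaussianReal 0 v
lemma g_int_id (v : ℝ≥0) : Integrable (fun u : ℝ => u) (gaussianReal 0 v) := by
  by_cases hv : v = 0
  · subst hv; rw [gaussianReal_zero_var]
    exact integrable_diracR _ _
  · rw [integrable_gaussian_iff 0 hv]
    exact integrable_pdf_mul_id 0 hv

lemma g_avg_id (v : ℝ≥0) : ∫ u, u ∂(gaussianReal 0 v) = 0 := by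
  by_cases hv : v = 0
  · subst hv; rw [gaussianReal_zero_var, integral_dirac]
  · rw [integral_gaussian_eq 0 hv]
    have h0 : (∫ u, gaussianPDFReal 0 v u * u) = 0 := by
      simpa using integral_pdf_mul_id 0 hv
    exact h0

lemma g_int_sq (v : ℝ≥0) : Integrable (fun u : ℝ => u ^ 2) (gaussianReal 0 v) := by
  by_cases hv : v = 0
  · subst hv; rw [gaussianReal_zero_var]
    exact integrable_diracR _ _
  · rw [integrable_gaussian_iff 0 hv]
    exact integrable_pdf_mul_sq hv

lemma g_avg_sq (v : ℝ≥0) : ∫ u, u ^ 2 ∂(gaussianReal 0 v) = v := by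
  by_cases hv : v = 0
  · subst hv; rw [gaussianReal_zero_var, integral_dirac]; simp
  · rw [integral_gaussian_eq 0 hv]
    exact integral_pdf_mul_sq hv

lemma g_int_exp (v : ℝ≥0) (t : ℝ) :
    Integrable (fun u : ℝ => rexp (t * u)) (gaussianReal 0 v) := by
  by_cases hv : v = 0
  · subst hv; rw [gaussianReal_zero_var]
    exact integrable_diracR _ _
  · rw [integrable_gaussian_iff 0 hv]
    have : (fun u => gaussianPDFReal 0 v u * rexp (t * u))
        = fun u => rexp (t ^ 2 * v / 2) * gaussianPDFReal (t * v) v u := by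
      ext u; exact pdf_tilt hv t u
    rw [this]
    exact (integrable_gaussianPDFReal _ _).const_mul _

lemma g_avg_exp (v : ℝ≥0) (t : ℝ) :
    ∫ u, rexp (t * u) ∂(gaussianReal 0 v) = rexp (t ^ 2 * v / 2) := by
  by_cases hv : v = 0
  · subst hv; rw [gaussianReal_zero_var, integral_dirac]; simp
  · rw [integral_gaussian_eq 0 hv]
    have : (fun u => gaussianPDFReal 0 v u * rexp (t * u))
        = fun u => rexp (t ^ 2 * v / 2) * gaussianPDFReal (t * v) v u := by
      ext u; exact pdf_tilt hv t u
    rw [this, integral_const_mul, integral_gaussianPDFReal_eq_one _ hv, mul_one]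

lemma g_int_mul_exp (v : ℝ≥0) (t : ℝ) :
    Integrable (fun u : ℝ => u * rexp (t * u)) (gaussianReal 0 v) := by
  by_cases hv : v = 0
  · subst hv; rw [gaussianReal_zero_var]
    exact integrable_diracR _ _
  · rw [integrable_gaussian_iff 0 hv]
    have : (fun u => gaussianPDFReal 0 v u * (u * rexp (t * u)))
        = fun u => rexp (t ^ 2 * v / 2) * (gaussianPDFReal (t * v) v u * u) := by
      ext u
      have := pdf_tilt hv t u
      calc gaussianPDFReal 0 v u * (u * rexp (t * u))
          = gaussianPDFReal 0 v u * rexp (t * u) * u := by ring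
        _ = rexp (t ^ 2 * v / 2) * (gaussianPDFReal (t * v) v u * u) := by rw [this]; ring
    rw [this]
    exact (integrable_pdf_mul_id _ hv).const_mul _

lemma g_avg_mul_exp (v : ℝ≥0) (t : ℝ) :
    ∫ u, u * rexp (t * u) ∂(gaussianReal 0 v) = t * v * rexp (t ^ 2 * v / 2) := by
  by_cases hv : v = 0
  · subst hv; rw [gaussianReal_zero_var, integral_dirac]; simp
  · rw [integral_gaussian_eq 0 hv]
    have h : (fun u => gaussianPDFReal 0 v u * (u * rexp (t * u)))
        = fun u => rexp (t ^ 2 * v / 2) * (gaussianPDFReal (t * v) v u * u) := by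
      ext u
      have h2 := pdf_tilt hv t u
      calc gaussianPDFReal 0 v u * (u * rexp (t * u))
          = gaussianPDFReal 0 v u * rexp (t * u) * u := by ring
        _ = rexp (t ^ 2 * v / 2) * (gaussianPDFReal (t * v) v u * u) := by rw [h2]; ring
    rw [h, integral_const_mul, integral_pdf_mul_id _ hv]
    ring


lemma transfer {Ω : Type*} [MeasurableSpace Ω] (μ : Measure Ω) (X : Ω → ℝ)
    (ν : Measure ℝ) [IsProbabilityMeasure ν] (hX : Measure.map X μ = ν)
    (f : ℝ → ℝ) (hf : Continuous f) :
    (∫ ω, f (X ω) ∂μ = ∫ u, f u ∂ν) ∧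
      (Integrable f ν → Integrable (fun ω => f (X ω)) μ) := by
  have hXm : AEMeasurable X μ := by
    by_contra h
    rw [Measure.map_of_not_aemeasurable h] at hX
    exact IsProbabilityMeasure.ne_zero ν hX.symm
  constructor
  · rw [← hX, integral_map hXm hf.aestronglyMeasurable]
  · intro hi
    rw [← hX] at hi
    exact (integrable_map_measure hf.aestronglyMeasurable hXm).mp hi

lemma aemeas {Ω : Type*} [MeasurableSpace Ω] (μ : Measure Ω) (X : Ω → ℝ)
    (ν : Measure ℝ) [IsProbabilityMeasure ν] (hX : Measure.map X μ = ν) :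
    AEMeasurable X μ := by
  by_contra h
  rw [Measure.map_of_not_aemeasurable h] at hX
  exact IsProbabilityMeasure.ne_zero ν hX.symm

end BGaux

open BGaux

/-- Let `(x, y)` be a bivariate centered Gaussian random vector, written (after
diagonalizing the covariance matrix) as `x = cos θ · X - sin θ · Y`,
`y = sin θ · X + cos θ · Y` with `X, Y` independent centered Gaussians.
Then `E[x·y] = E[x·exp(y − E[y²]/2)]`. -/
theorem bivariate_gaussian_exp_identity
    {Ω : Type*} [MeasurableSpace Ω] (μ : Measure Ω) [IsProbabilityMeasure μ]
    (X Y : Ω → ℝ) (σ τ : ℝ≥0) (θ : ℝ)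
    (hXY : IndepFun X Y μ)
    (hX : Measure.map X μ = gaussianReal 0 (σ ^ 2))
    (hY : Measure.map Y μ = gaussianReal 0 (τ ^ 2))
    (x y : Ω → ℝ)
    (hx : x = fun ω => Real.cos θ * X ω - Real.sin θ * Y ω)
    (hy : y = fun ω => Real.sin θ * X ω + Real.cos θ * Y ω) :
    ∫ ω, x ω * y ω ∂μ
      = ∫ ω, x ω * Real.exp (y ω - (∫ ω', (y ω') ^ 2 ∂μ) / 2) ∂μ := by
  subst hx hy
  set s := Real.sin θ with hs
  set c := Real.cos θ with hc
  have hXm : AEMeasurable X μ := aemeas μ X _ hX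
  have hYm : AEMeasurable Y μ := aemeas μ Y _ hY
  -- moments of X
  have iX : Integrable X μ := (transfer μ X _ hX (fun u => u) continuous_id).2 (g_int_id _)
  have EX : ∫ ω, X ω ∂μ = 0 := by
    rw [show (∫ ω, X ω ∂μ) = ∫ ω, (fun u : ℝ => u) (X ω) ∂μ from rfl,
      (transfer μ X _ hX (fun u => u) continuous_id).1, g_avg_id]
  have iX2 : Integrable (fun ω => X ω ^ 2) μ :=
    (transfer μ X _ hX (fun u => u ^ 2) (by continuity)).2 (g_int_sq _)
  have EX2 : ∫ ω, X ω ^ 2 ∂μ = (σ:ℝ) ^ 2 := by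
    rw [(transfer μ X _ hX (fun u => u ^ 2) (by continuity)).1, g_avg_sq]
    push_cast
    ring
  have iXe : Integrable (fun ω => rexp (s * X ω)) μ :=
    (transfer μ X _ hX (fun u => rexp (s * u)) (by continuity)).2 (g_int_exp _ s)
  have EXe : ∫ ω, rexp (s * X ω) ∂μ = rexp (s ^ 2 * (σ:ℝ) ^ 2 / 2) := by
    rw [(transfer μ X _ hX (fun u => rexp (s * u)) (by continuity)).1, g_avg_exp]
    push_cast
    ring_nf
  have iXme : Integrable (fun ω => X ω * rexp (s * X ω)) μ :=
    (transfer μ X _ hX (fun u => u * rexp (s * u)) (by continuity)).2 (g_int_mul_exp _ s)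
  have EXme : ∫ ω, X ω * rexp (s * X ω) ∂μ = s * (σ:ℝ) ^ 2 * rexp (s ^ 2 * (σ:ℝ) ^ 2 / 2) := by
    rw [(transfer μ X _ hX (fun u => u * rexp (s * u)) (by continuity)).1, g_avg_mul_exp]
    push_cast
    ring_nf
  -- moments of Y
  have iY : Integrable Y μ := (transfer μ Y _ hY (fun u => u) continuous_id).2 (g_int_id _)
  have EY : ∫ ω, Y ω ∂μ = 0 := by
    rw [show (∫ ω, Y ω ∂μ) = ∫ ω, (fun u : ℝ => u) (Y ω) ∂μ from rfl,
      (transfer μ Y _ hY (fun u => u) continuous_id).1, g_avg_id]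
  have iY2 : Integrable (fun ω => Y ω ^ 2) μ :=
    (transfer μ Y _ hY (fun u => u ^ 2) (by continuity)).2 (g_int_sq _)
  have EY2 : ∫ ω, Y ω ^ 2 ∂μ = (τ:ℝ) ^ 2 := by
    rw [(transfer μ Y _ hY (fun u => u ^ 2) (by continuity)).1, g_avg_sq]
    push_cast
    ring
  have iYe : Integrable (fun ω => rexp (c * Y ω)) μ :=
    (transfer μ Y _ hY (fun u => rexp (c * u)) (by continuity)).2 (g_int_exp _ c)
  have EYe : ∫ ω, rexp (c * Y ω) ∂μ = rexp (c ^ 2 * (τ:ℝ) ^ 2 / 2) := by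
    rw [(transfer μ Y _ hY (fun u => rexp (c * u)) (by continuity)).1, g_avg_exp]
    push_cast
    ring_nf
  have iYme : Integrable (fun ω => Y ω * rexp (c * Y ω)) μ :=
    (transfer μ Y _ hY (fun u => u * rexp (c * u)) (by continuity)).2 (g_int_mul_exp _ c)
  have EYme : ∫ ω, Y ω * rexp (c * Y ω) ∂μ = c * (τ:ℝ) ^ 2 * rexp (c ^ 2 * (τ:ℝ) ^ 2 / 2) := by
    rw [(transfer μ Y _ hY (fun u => u * rexp (c * u)) (by continuity)).1, g_avg_mul_exp]
    push_cast
    ring_nf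
  -- cross moments
  have iXY : Integrable (fun ω => X ω * Y ω) μ := hXY.integrable_mul iX iY
  have EXY : ∫ ω, X ω * Y ω ∂μ = 0 := by
    rw [hXY.integral_fun_mul_eq_mul_integral hXm.aestronglyMeasurable hYm.aestronglyMeasurable, EX, EY, mul_zero]
  -- LHS
  have hL : ∫ ω, (c * X ω - s * Y ω) * (s * X ω + c * Y ω) ∂μ
      = c * s * ((σ:ℝ) ^ 2 - (τ:ℝ) ^ 2) := by
    have expand : (fun ω => (c * X ω - s * Y ω) * (s * X ω + c * Y ω))
        = fun ω => (c * s) * X ω ^ 2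
            + ((c * c - s * s) * (X ω * Y ω) - (s * c) * Y ω ^ 2) := by
      ext ω; ring
    have i1 : Integrable (fun ω => (c * c - s * s) * (X ω * Y ω)) μ := iXY.const_mul _
    have i2 : Integrable (fun ω => (s * c) * Y ω ^ 2) μ := iY2.const_mul _
    have i3 : Integrable (fun ω => (c * s) * X ω ^ 2) μ := iX2.const_mul _
    have i12 : Integrable (fun ω => (c * c - s * s) * (X ω * Y ω) - s * c * Y ω ^ 2) μ :=
      i1.sub i2
    rw [expand, integral_add i3 i12, integral_sub i1 i2, integral_const_mul,
      integral_const_mul, integral_const_mul, EX2, EY2, EXY]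
    ring
  -- E[y^2]
  have hV : ∫ ω', (s * X ω' + c * Y ω') ^ 2 ∂μ = s ^ 2 * (σ:ℝ) ^ 2 + c ^ 2 * (τ:ℝ) ^ 2 := by
    have expand : (fun ω => (s * X ω + c * Y ω) ^ 2)
        = fun ω => (s * s) * X ω ^ 2
            + ((2 * s * c) * (X ω * Y ω) + (c * c) * Y ω ^ 2) := by
      ext ω; ring
    have i1 : Integrable (fun ω => (2 * s * c) * (X ω * Y ω)) μ := iXY.const_mul _
    have i2 : Integrable (fun ω => (c * c) * Y ω ^ 2) μ := iY2.const_mul _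
    have i3 : Integrable (fun ω => (s * s) * X ω ^ 2) μ := iX2.const_mul _
    have i12 : Integrable (fun ω => 2 * s * c * (X ω * Y ω) + c * c * Y ω ^ 2) μ :=
      i1.add i2
    rw [expand, integral_add i3 i12, integral_add i1 i2, integral_const_mul,
      integral_const_mul, integral_const_mul, EX2, EY2, EXY]
    ring
  rw [hL, hV]
  -- RHS
  set V : ℝ := s ^ 2 * (σ:ℝ) ^ 2 + c ^ 2 * (τ:ℝ) ^ 2 with hVdef
  have expand2 : (fun ω => (c * X ω - s * Y ω) * rexp (s * X ω + c * Y ω - V / 2))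
      = fun ω => rexp (-(V / 2)) *
          ((c * (X ω * rexp (s * X ω))) * rexp (c * Y ω)
            - rexp (s * X ω) * (s * (Y ω * rexp (c * Y ω)))) := by
    ext ω
    rw [show s * X ω + c * Y ω - V / 2 = s * X ω + (c * Y ω + -(V / 2)) by ring,
      Real.exp_add, Real.exp_add]
    ring
  have mφ1 : Measurable (fun u : ℝ => c * (u * rexp (s * u))) :=
    (measurable_id.mul (Real.measurable_exp.comp (measurable_id.const_mul s))).const_mul c
  have mψ1 : Measurable (fun u : ℝ => rexp (c * u)) :=
    Real.measurable_exp.comp (measurable_id.const_mul c)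
  have mφ2 : Measurable (fun u : ℝ => rexp (s * u)) :=
    Real.measurable_exp.comp (measurable_id.const_mul s)
  have mψ2 : Measurable (fun u : ℝ => s * (u * rexp (c * u))) :=
    (measurable_id.mul (Real.measurable_exp.comp (measurable_id.const_mul c))).const_mul s
  have ind1 : IndepFun (fun ω => c * (X ω * rexp (s * X ω))) (fun ω => rexp (c * Y ω)) μ :=
    hXY.comp mφ1 mψ1
  have ind2 : IndepFun (fun ω => rexp (s * X ω)) (fun ω => s * (Y ω * rexp (c * Y ω))) μ :=
    hXY.comp mφ2 mψ2
  have iA : Integrable (fun ω => (c * (X ω * rexp (s * X ω))) * rexp (c * Y ω)) μ :=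
    ind1.integrable_mul (iXme.const_mul c) iYe
  have iB : Integrable (fun ω => rexp (s * X ω) * (s * (Y ω * rexp (c * Y ω)))) μ :=
    ind2.integrable_mul iXe (iYme.const_mul s)
  rw [expand2, integral_const_mul, integral_sub iA iB,
    ind1.integral_fun_mul_eq_mul_integral (((mφ1.comp_aemeasurable hXm)).aestronglyMeasurable)
      ((mψ1.comp_aemeasurable hYm).aestronglyMeasurable),
    ind2.integral_fun_mul_eq_mul_integral ((mφ2.comp_aemeasurable hXm).aestronglyMeasurable)
      ((mψ2.comp_aemeasurable hYm).aestronglyMeasurable),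
    integral_const_mul, integral_const_mul, EXme, EYe, EXe, EYme]
  have hE : rexp (-(V / 2)) * rexp (s ^ 2 * (σ:ℝ) ^ 2 / 2) * rexp (c ^ 2 * (τ:ℝ) ^ 2 / 2)
      = 1 := by
    rw [← Real.exp_add, ← Real.exp_add, show -(V / 2) + s ^ 2 * (σ:ℝ) ^ 2 / 2
      + c ^ 2 * (τ:ℝ) ^ 2 / 2 = 0 by rw [hVdef]; ring, Real.exp_zero]
  linear_combination (-(c * s * ((σ:ℝ) ^ 2 - (τ:ℝ) ^ 2))) * hE
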